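/- Let G be acritical (no edge e with α(G∖e) = α(G)+1), S a maximum stable set, and x = χ^S/α(G). Then (M_G x)_i > 0 for every vertex i ∉ S. -/

import Mathlib

open Matrix

/-- A finset of vertices is stable (independent) in `G`. -/
def IsStableSet {n : ℕ} (G : SimpleGraph (Fin n)) (S : Finset (Fin n)) : Prop :=
  ∀ i ∈ S, ∀ j ∈ S, ¬ G.Adj i j

/-- If `G` is acritical (deleting any edge does not increase the stability number),
`S` is a maximum stable set and `x = χ^S/α(G)`, then every vertex `i ∉ S` has at least
two neighbours in `S` and `(M_G x)_i = N_S(i) − 1 > 0`. -/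
theorem acritical_strict_complementarity {n : ℕ} (G : SimpleGraph (Fin n))
    [DecidableRel G.Adj] (k : ℕ) (hk1 : 1 ≤ k)
    (S : Finset (Fin n)) (hS : IsStableSet G S) (hcard : S.card = k)
    (hbound : ∀ T : Finset (Fin n), IsStableSet G T → T.card ≤ k)
    (hacrit : ∀ u v : Fin n, G.Adj u v →
      ¬ ∃ T : Finset (Fin n), IsStableSet (G.deleteEdges {s(u, v)}) T ∧ T.card = k + 1) :
    ∀ i : Fin n, i ∉ S →
      2 ≤ (S.filter fun j => G.Adj i j).card ∧
      (((k : ℝ) • (G.adjMatrix ℝ + 1) - Matrix.of fun _ _ => (1 : ℝ)).mulVec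
          (fun j => (if j ∈ S then 1 else 0) / k)) i
        = ((S.filter fun j => G.Adj i j).card : ℝ) - 1 ∧
      0 < (((k : ℝ) • (G.adjMatrix ℝ + 1) - Matrix.of fun _ _ => (1 : ℝ)).mulVec
          (fun j => (if j ∈ S then 1 else 0) / k)) i := by
  intro i hi
  have hkR : (k : ℝ) ≠ 0 := by positivity
  -- Step 1: N_S(i) ≥ 2
  have hN2 : 2 ≤ (S.filter fun j => G.Adj i j).card := by
    by_contra h
    push_neg at h
    interval_cases hc : (S.filter fun j => G.Adj i j).card
    · -- no neighbour in S: insert i S is stable, too big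
      have hnone : ∀ j ∈ S, ¬ G.Adj i j := by
        intro j hj hadj
        have : j ∈ S.filter fun j => G.Adj i j := Finset.mem_filter.2 ⟨hj, hadj⟩
        simp [Finset.card_eq_zero.mp hc] at this
      have hstab : IsStableSet G (insert i S) := by
        intro a ha b hb hadj
        rcases Finset.mem_insert.1 ha with hai | ha <;>
          rcases Finset.mem_insert.1 hb with hbi | hb
        · rw [hai, hbi] at hadj; exact G.loopless.irrefl i hadj
        · rw [hai] at hadj; exact hnone b hb hadj
        · rw [hbi] at hadj; exact hnone a ha hadj.symm
        · exact hS a ha b hb hadj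
      have := hbound _ hstab
      rw [Finset.card_insert_of_notMem hi, hcard] at this
      omega
    · -- exactly one neighbour j: delete edge {i,j}
      obtain ⟨j, hj⟩ := Finset.card_eq_one.mp hc
      have hjmem : j ∈ S ∧ G.Adj i j := by
        have : j ∈ S.filter fun j => G.Adj i j := by simp [hj]
        exact Finset.mem_filter.1 this
      refine hacrit i j hjmem.2 ⟨insert i S, ?_, ?_⟩
      · have key : ∀ a ∈ S, ¬ (G.deleteEdges {s(i, j)}).Adj i a := by
          intro a ha hadj
          rw [SimpleGraph.deleteEdges_adj] at hadj
          have haj : a ∈ S.filter fun j => G.Adj i j :=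
            Finset.mem_filter.2 ⟨ha, hadj.1⟩
          rw [hj, Finset.mem_singleton] at haj
          rw [haj] at hadj
          simp at hadj
        intro a ha b hb hadj
        rcases Finset.mem_insert.1 ha with hai | ha <;>
          rcases Finset.mem_insert.1 hb with hbi | hb
        · rw [hai, hbi] at hadj; exact (G.deleteEdges _).loopless.irrefl i hadj
        · rw [hai] at hadj; exact key b hb hadj
        · rw [hbi] at hadj; exact key a ha hadj.symm
        · rw [SimpleGraph.deleteEdges_adj] at hadj
          exact hS a ha b hb hadj.1
      · rw [Finset.card_insert_of_notMem hi, hcard]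
  -- Step 2: the computation
  have hcomp : (((k : ℝ) • (G.adjMatrix ℝ + 1) - Matrix.of fun _ _ => (1 : ℝ)).mulVec
      (fun j => (if j ∈ S then 1 else 0) / k)) i
      = ((S.filter fun j => G.Adj i j).card : ℝ) - 1 := by
    simp only [mulVec, dotProduct, Matrix.sub_apply, Matrix.smul_apply, Matrix.add_apply,
      Matrix.one_apply, SimpleGraph.adjMatrix_apply, Matrix.of_apply, smul_eq_mul]
    have step : ∀ j : Fin n,
        ((k : ℝ) * ((if G.Adj i j then 1 else 0) + if i = j then 1 else 0) - 1) *
          ((if j ∈ S then 1 else 0) / k)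
        = if j ∈ S then ((if G.Adj i j then (1:ℝ) else 0) - 1 / k) else 0 := by
      intro j
      by_cases hjS : j ∈ S
      · have hij : i ≠ j := fun h => hi (h ▸ hjS)
        simp only [hjS, if_pos, hij, if_neg, if_false, add_zero, if_true]
        field_simp
      · simp [hjS]
    rw [Finset.sum_congr rfl (fun j _ => step j)]
    rw [Finset.sum_ite_mem, Finset.univ_inter, Finset.sum_sub_distrib]
    rw [Finset.sum_const, hcard, nsmul_eq_mul]
    rw [mul_one_div, div_self hkR]
    congr 1
    rw [Finset.sum_boole]
  refine ⟨hN2, hcomp, ?_⟩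
  rw [hcomp]
  have : (2 : ℝ) ≤ ((S.filter fun j => G.Adj i j).card : ℝ) := by exact_mod_cast hN2
  linarith
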